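/- Let A be an invertible n×n matrix and N an n×n matrix with [A,N] = UŨᵀ where U, Ũ ∈ ℝ^{n×s}. Then for any C ∈ ℝ^{n×r} and any k ≥ 0, the image under N of the extended Krylov subspace EK_k(A,C) is contained in EK_k(A,(NC,U)), where EK_k(A,C) := K_k(A,C) + K_k(A⁻¹, A⁻¹C) and K_k(A,C) is the block Krylov subspace spanned by vectors p(A)Cw with deg(p) ≤ k, w ∈ ℝ^r. -/

import Mathlib

open Matrix Polynomial

/-- Block Krylov subspace `K_k(A,C) = span{p(A) C w : deg p ≤ k, w}`. -/
noncomputable def blockKrylov {n : ℕ} {m : Type*} [Fintype m]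
    (k : ℕ) (A : Matrix (Fin n) (Fin n) ℝ) (C : Matrix (Fin n) m ℝ) :
    Submodule ℝ (Fin n → ℝ) :=
  Submodule.span ℝ
    {v | ∃ p : Polynomial ℝ, p.natDegree ≤ k ∧ ∃ w : m → ℝ, v = (aeval A p) *ᵥ (C *ᵥ w)}

/-- Extended Krylov subspace `EK_k(A,C) = K_k(A,C) + K_k(A⁻¹, A⁻¹C)`. -/
noncomputable def extKrylov {n : ℕ} {m : Type*} [Fintype m]
    (k : ℕ) (A : Matrix (Fin n) (Fin n) ℝ) (C : Matrix (Fin n) m ℝ) :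
    Submodule ℝ (Fin n → ℝ) :=
  blockKrylov k A C ⊔ blockKrylov k A⁻¹ (A⁻¹ * C)

lemma mem_blockKrylov {n : ℕ} {m : Type*} [Fintype m] {k : ℕ}
    {A : Matrix (Fin n) (Fin n) ℝ} {C : Matrix (Fin n) m ℝ}
    {p : Polynomial ℝ} (hp : p.natDegree ≤ k) (w : m → ℝ) :
    (aeval A p) *ᵥ (C *ᵥ w) ∈ blockKrylov k A C :=
  Submodule.subset_span ⟨p, hp, w, rfl⟩

lemma mem_blockKrylov_one {n : ℕ} {m : Type*} [Fintype m] {k : ℕ}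
    {A : Matrix (Fin n) (Fin n) ℝ} {C : Matrix (Fin n) m ℝ} (w : m → ℝ) :
    C *ᵥ w ∈ blockKrylov k A C := by
  simpa using mem_blockKrylov (A := A) (C := C) (p := 1)
    (by simp : (1 : Polynomial ℝ).natDegree ≤ k) w

lemma blockKrylov_mono {n : ℕ} {m : Type*} [Fintype m] {j k : ℕ} (h : j ≤ k)
    {A : Matrix (Fin n) (Fin n) ℝ} {C : Matrix (Fin n) m ℝ} :
    blockKrylov j A C ≤ blockKrylov k A C :=
  Submodule.span_mono (fun _v ⟨p, hp, w, hv⟩ => ⟨p, hp.trans h, w, hv⟩)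

lemma mulVec_mem_blockKrylov {n : ℕ} {m : Type*} [Fintype m] {j : ℕ}
    {A : Matrix (Fin n) (Fin n) ℝ} {C : Matrix (Fin n) m ℝ}
    {v : Fin n → ℝ} (hv : v ∈ blockKrylov j A C) :
    A *ᵥ v ∈ blockKrylov (j + 1) A C := by
  have : Submodule.map A.mulVecLin (blockKrylov j A C) ≤ blockKrylov (j + 1) A C := by
    rw [blockKrylov, Submodule.map_span_le]
    rintro v ⟨p, hp, w, rfl⟩
    have heq : A.mulVecLin ((aeval A p) *ᵥ (C *ᵥ w)) = (aeval A (X * p)) *ᵥ (C *ᵥ w) := by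
      simp [Matrix.mulVec_mulVec, Matrix.mul_assoc]
    rw [heq]
    have hdeg : (X * p).natDegree ≤ j + 1 := by
      refine natDegree_mul_le.trans ?_
      simp only [natDegree_X]
      omega
    exact mem_blockKrylov hdeg w
  exact this ⟨v, hv, rfl⟩

lemma sum_mulVec' {n : ℕ} {ι : Type*} (t : Finset ι)
    (M : ι → Matrix (Fin n) (Fin n) ℝ) (x : Fin n → ℝ) :
    (∑ i ∈ t, M i) *ᵥ x = ∑ i ∈ t, M i *ᵥ x := by
  induction t using Finset.cons_induction with
  | empty => simp
  | cons a t ha ih => simp [Matrix.add_mulVec, ih]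

theorem mul_extKrylov_subset {n s r : ℕ}
    (A N : Matrix (Fin n) (Fin n) ℝ) (U Ut : Matrix (Fin n) (Fin s) ℝ)
    (hA : IsUnit A) (hcom : A * N - N * A = U * Utᵀ)
    (C : Matrix (Fin n) (Fin r) ℝ) (k : ℕ) :
    Submodule.map N.mulVecLin (extKrylov k A C) ≤
      extKrylov k A (Matrix.fromCols (N * C) U) := by
  have hd : IsUnit A.det := (Matrix.isUnit_iff_isUnit_det A).mp hA
  have hAiA : A⁻¹ * A = 1 := Matrix.nonsing_inv_mul A hd
  have hAAi : A * A⁻¹ = 1 := Matrix.mul_nonsing_inv A hd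
  have hNA : N * A = A * N - U * Utᵀ := by rw [← hcom]; abel
  have hAN : A * N = N * A + U * Utᵀ := by rw [← hcom]; abel
  have hNAi : N * A⁻¹ = A⁻¹ * N + A⁻¹ * (U * Utᵀ) * A⁻¹ := by
    have e1 : A * (N * A⁻¹) = N + U * Utᵀ * A⁻¹ := by
      rw [← Matrix.mul_assoc, hAN, Matrix.add_mul, Matrix.mul_assoc, hAAi, Matrix.mul_one]
    calc N * A⁻¹ = A⁻¹ * (A * (N * A⁻¹)) := by
          rw [← Matrix.mul_assoc, hAiA, Matrix.one_mul]
      _ = A⁻¹ * (N + U * Utᵀ * A⁻¹) := by rw [e1]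
      _ = A⁻¹ * N + A⁻¹ * (U * Utᵀ) * A⁻¹ := by
          simp [Matrix.mul_add, Matrix.mul_assoc]
  -- vector-level commutation identities
  have hvec_pos : ∀ x : Fin n → ℝ,
      N *ᵥ (A *ᵥ x) = A *ᵥ (N *ᵥ x) - U *ᵥ (Utᵀ *ᵥ x) := by
    intro x
    simp only [Matrix.mulVec_mulVec, ← Matrix.sub_mulVec, hNA]
  have hvec_neg : ∀ x : Fin n → ℝ,
      N *ᵥ (A⁻¹ *ᵥ x) = A⁻¹ *ᵥ (N *ᵥ x) + A⁻¹ *ᵥ (U *ᵥ (Utᵀ *ᵥ (A⁻¹ *ᵥ x))) := by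
    intro x
    simp only [Matrix.mulVec_mulVec, ← Matrix.add_mulVec, hNAi]
    simp [Matrix.mul_assoc]
  set D := Matrix.fromCols (N * C) U with hD
  have hcolU : ∀ (j : ℕ) (v : Fin s → ℝ), U *ᵥ v ∈ blockKrylov j A D := by
    intro j v
    have h : U *ᵥ v = D *ᵥ Sum.elim 0 v := by
      rw [hD, fromCols_mulVec_sumElim]; simp
    rw [h]; exact mem_blockKrylov_one _
  have hcolNC : ∀ (j : ℕ) (w : Fin r → ℝ), N *ᵥ (C *ᵥ w) ∈ blockKrylov j A D := by
    intro j w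
    have h : N *ᵥ (C *ᵥ w) = D *ᵥ Sum.elim w 0 := by
      rw [hD, fromCols_mulVec_sumElim]; simp [Matrix.mulVec_mulVec]
    rw [h]; exact mem_blockKrylov_one _
  have key_pos : ∀ (j : ℕ) (w : Fin r → ℝ),
      N *ᵥ (A ^ j *ᵥ (C *ᵥ w)) ∈ blockKrylov j A D := by
    intro j
    induction j with
    | zero => intro w; simpa using hcolNC 0 w
    | succ j ih =>
      intro w
      have h1 : N *ᵥ (A ^ (j + 1) *ᵥ (C *ᵥ w))
          = A *ᵥ (N *ᵥ (A ^ j *ᵥ (C *ᵥ w))) - U *ᵥ (Utᵀ *ᵥ (A ^ j *ᵥ (C *ᵥ w))) := by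
        rw [pow_succ', ← Matrix.mulVec_mulVec, hvec_pos]
      rw [h1]
      exact Submodule.sub_mem _ (mulVec_mem_blockKrylov (ih w)) (hcolU (j + 1) _)
  set Di := A⁻¹ * D with hDi
  have hcolUi : ∀ (j : ℕ) (v : Fin s → ℝ), A⁻¹ *ᵥ (U *ᵥ v) ∈ blockKrylov j A⁻¹ Di := by
    intro j v
    have h : A⁻¹ *ᵥ (U *ᵥ v) = Di *ᵥ Sum.elim 0 v := by
      rw [hDi, hD, mul_fromCols, fromCols_mulVec_sumElim]
      simp [Matrix.mulVec_mulVec]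
    rw [h]; exact mem_blockKrylov_one _
  have hcolNCi : ∀ (j : ℕ) (w : Fin r → ℝ),
      A⁻¹ *ᵥ (N *ᵥ (C *ᵥ w)) ∈ blockKrylov j A⁻¹ Di := by
    intro j w
    have h : A⁻¹ *ᵥ (N *ᵥ (C *ᵥ w)) = Di *ᵥ Sum.elim w 0 := by
      rw [hDi, hD, mul_fromCols, fromCols_mulVec_sumElim]
      simp [Matrix.mulVec_mulVec, Matrix.mul_assoc]
    rw [h]; exact mem_blockKrylov_one _
  have key_neg : ∀ (j : ℕ) (w : Fin r → ℝ),
      N *ᵥ (A⁻¹ ^ j *ᵥ (A⁻¹ *ᵥ (C *ᵥ w))) ∈ blockKrylov j A⁻¹ Di := by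
    intro j
    induction j with
    | zero =>
      intro w
      rw [pow_zero, Matrix.one_mulVec, hvec_neg]
      exact Submodule.add_mem _ (hcolNCi 0 w) (hcolUi 0 _)
    | succ j ih =>
      intro w
      have h1 : N *ᵥ ((A⁻¹ : Matrix (Fin n) (Fin n) ℝ) ^ (j + 1) *ᵥ (A⁻¹ *ᵥ (C *ᵥ w)))
          = A⁻¹ *ᵥ (N *ᵥ (A⁻¹ ^ j *ᵥ (A⁻¹ *ᵥ (C *ᵥ w))))
            + A⁻¹ *ᵥ (U *ᵥ (Utᵀ *ᵥ (A⁻¹ *ᵥ (A⁻¹ ^ j *ᵥ (A⁻¹ *ᵥ (C *ᵥ w)))))) := by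
        rw [pow_succ', ← Matrix.mulVec_mulVec, hvec_neg]
      rw [h1]
      exact Submodule.add_mem _ (mulVec_mem_blockKrylov (ih w)) (hcolUi (j + 1) _)
  rw [extKrylov, Submodule.map_sup, sup_le_iff]
  constructor
  · rw [blockKrylov, Submodule.map_span_le]
    rintro v ⟨p, hp, w, rfl⟩
    have hexp : N.mulVecLin ((aeval A p) *ᵥ (C *ᵥ w))
        = ∑ i ∈ Finset.range (p.natDegree + 1),
            p.coeff i • (N *ᵥ (A ^ i *ᵥ (C *ᵥ w))) := by
      rw [aeval_eq_sum_range, sum_mulVec', map_sum]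
      refine Finset.sum_congr rfl fun i _ => ?_
      simp [Matrix.smul_mulVec, Matrix.mulVecLin_apply]
    rw [hexp]
    refine Submodule.sum_mem _ fun i hi => Submodule.smul_mem _ _ ?_
    have hik : i ≤ k := le_trans (Nat.lt_succ_iff.mp (Finset.mem_range.mp hi)) hp
    exact le_sup_left (α := Submodule ℝ (Fin n → ℝ))
      (blockKrylov_mono hik (key_pos i w))
  · rw [blockKrylov, Submodule.map_span_le]
    rintro v ⟨p, hp, w, rfl⟩
    have hCw : (A⁻¹ * C) *ᵥ w = A⁻¹ *ᵥ (C *ᵥ w) := by rw [← Matrix.mulVec_mulVec]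
    have hexp : N.mulVecLin ((aeval A⁻¹ p) *ᵥ ((A⁻¹ * C) *ᵥ w))
        = ∑ i ∈ Finset.range (p.natDegree + 1),
            p.coeff i • (N *ᵥ (A⁻¹ ^ i *ᵥ (A⁻¹ *ᵥ (C *ᵥ w)))) := by
      rw [hCw, aeval_eq_sum_range, sum_mulVec', map_sum]
      refine Finset.sum_congr rfl fun i _ => ?_
      simp [Matrix.smul_mulVec, Matrix.mulVecLin_apply]
    rw [hexp]
    refine Submodule.sum_mem _ fun i hi => Submodule.smul_mem _ _ ?_
    have hik : i ≤ k := le_trans (Nat.lt_succ_iff.mp (Finset.mem_range.mp hi)) hp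
    exact le_sup_right (α := Submodule ℝ (Fin n → ℝ))
      (blockKrylov_mono hik (key_neg i w))
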